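/- Let k be an infinite field of any characteristic and R = k[x,y]. For any homogeneous ideal I ⊆ R with R/I artinian, the algebra R/I has the Weak Lefschetz Property: there exists a linear form ℓ such that for all i, the map ×ℓ : [R/I]_i → [R/I]_{i+1} has maximal rank. -/

import Mathlib

open MvPolynomial

/-- The dimension of the degree-`i` component of the graded algebra `R/I`, where
`R = k[x_1,...,x_r]` is standard graded: it is the image of the space of homogeneous
polynomials of degree `i` in the quotient. -/
noncomputable def hilb {k : Type*} [Field k] {σ : Type*} (I : Ideal (MvPolynomial σ k))
    (i : ℕ) : ℕ :=
  Module.finrank k ((homogeneousSubmodule σ k i).map (Ideal.Quotient.mkₐ k I).toLinearMap)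

/-- Injectivity of the multiplication map `×f : [R/I]_i → [R/I]_{i + deg f}`. -/
def mulInj {k : Type*} [Field k] {σ : Type*} (I : Ideal (MvPolynomial σ k))
    (f : MvPolynomial σ k) (i : ℕ) : Prop :=
  ∀ g ∈ homogeneousSubmodule σ k i, f * g ∈ I → g ∈ I

/-- Surjectivity of the multiplication map `×f : [R/I]_i → [R/I]_j` (with `j = i + deg f`). -/
def mulSurj {k : Type*} [Field k] {σ : Type*} (I : Ideal (MvPolynomial σ k))
    (f : MvPolynomial σ k) (i j : ℕ) : Prop :=
  ∀ g ∈ homogeneousSubmodule σ k j, ∃ h ∈ homogeneousSubmodule σ k i, g - f * h ∈ I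

section Aux

variable {k : Type*} [Field k]

/-- If each `X j - s j` lies in an ideal `J`, then `p - aeval s p ∈ J` for every `p`. -/
private lemma sub_aeval_mem (J : Ideal (MvPolynomial (Fin 2) k))
    (s : Fin 2 → MvPolynomial (Fin 2) k) (hs : ∀ j, X j - s j ∈ J)
    (p : MvPolynomial (Fin 2) k) : p - aeval s p ∈ J := by
  induction p using MvPolynomial.induction_on with
  | C a => simpa using J.zero_mem
  | add p q hp hq =>
      have : p + q - aeval s (p + q) = (p - aeval s p) + (q - aeval s q) := by
        rw [map_add]; ring
      rw [this]; exact J.add_mem hp hq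
  | mul_X p j hp =>
      have : p * X j - aeval s (p * X j)
          = p * (X j - s j) + s j * (p - aeval s p) := by
        rw [map_mul, aeval_X]; ring
      rw [this]
      exact J.add_mem (J.mul_mem_left _ (hs j)) (J.mul_mem_left _ hp)

/-- Substituting `X i ↦ w i • u` into a homogeneous polynomial of degree `n` yields
`(eval w p) • u ^ n`. -/
private lemma aeval_homog (w : Fin 2 → k) (u : MvPolynomial (Fin 2) k) {n : ℕ}
    {p : MvPolynomial (Fin 2) k} (hp : p.IsHomogeneous n) :
    aeval (fun i => C (w i) * u) p = C (eval w p) * u ^ n := by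
  conv_lhs => rw [p.as_sum]
  conv_rhs => rw [p.as_sum]
  rw [map_sum, map_sum (eval w), map_sum C, Finset.sum_mul]
  refine Finset.sum_congr rfl fun d hd => ?_
  have hdeg : d.degree = n := by
    by_contra hne
    exact (MvPolynomial.mem_support_iff.1 hd) (hp.coeff_eq_zero hne)
  rw [aeval_monomial, eval_monomial]
  have h1 : (d.prod fun i e => (C (w i) * u) ^ e)
      = (d.prod fun i e => (C (w i) : MvPolynomial (Fin 2) k) ^ e) * d.prod fun i e => u ^ e := by
    rw [← Finsupp.prod_mul]
    exact Finsupp.prod_congr fun i _ => mul_pow _ _ _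
  have h2 : (d.prod fun i e => u ^ e) = u ^ n := by
    rw [Finsupp.prod, Finset.prod_pow_eq_pow_sum, ← hdeg]; rfl
  have h3 : (d.prod fun i e => (C (w i) : MvPolynomial (Fin 2) k) ^ e)
      = C (d.prod fun i e => w i ^ e) := by
    rw [map_finsuppProd]
    exact Finsupp.prod_congr fun i _ => by rw [map_pow]
  rw [h1, h2, h3, algebraMap_eq, map_mul, mul_assoc]

/-- Degree `n+1` homogeneous component of a product with a linear form. -/
private lemma homogComp_mul {ℓ : MvPolynomial (Fin 2) k} (hl : ℓ.IsHomogeneous 1)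
    (n : ℕ) (v : MvPolynomial (Fin 2) k) :
    homogeneousComponent (n + 1) (ℓ * v) = ℓ * homogeneousComponent n v := by
  conv_lhs => rw [← v.sum_homogeneousComponent]
  rw [Finset.mul_sum, map_sum]
  have key : ∀ j, homogeneousComponent (n + 1) (ℓ * homogeneousComponent j v)
      = if n + 1 = 1 + j then ℓ * homogeneousComponent j v else 0 := fun j =>
    homogeneousComponent_of_mem
      ((mem_homogeneousSubmodule _ _).2 (hl.mul (homogeneousComponent_isHomogeneous j v)))
  simp_rw [key]
  have hcond : ∀ j, (n + 1 = 1 + j) = (j = n) := fun j => by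
    simp only [eq_iff_iff]; omega
  simp_rw [hcond]
  rw [Finset.sum_ite_eq' (Finset.range (v.totalDegree + 1))]
  by_cases hn : n ∈ Finset.range (v.totalDegree + 1)
  · rw [if_pos hn]
  · rw [if_neg hn]
    have : homogeneousComponent n v = 0 := by
      apply homogeneousComponent_eq_zero
      simp only [Finset.mem_range] at hn
      omega
    rw [this, mul_zero]

end Aux

/-- in two variables over an infinite field of any characteristic, every
artinian quotient has the Weak Lefschetz Property. -/
theorem stmt2 (k : Type*) [Field k] [Infinite k] (I : Ideal (MvPolynomial (Fin 2) k))
    (hhom : ∀ f ∈ I, ∀ n : ℕ, homogeneousComponent n f ∈ I)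
    (hart : Module.Finite k (MvPolynomial (Fin 2) k ⧸ I)) :
    ∃ ℓ ∈ homogeneousSubmodule (Fin 2) k 1, ℓ ≠ 0 ∧
      ∀ i : ℕ, mulInj I ℓ i ∨ mulSurj I ℓ i (i + 1) := by
  classical
  by_cases hP : ∃ n : ℕ, ∃ f : MvPolynomial (Fin 2) k, f ∈ I ∧ f.IsHomogeneous n ∧ f ≠ 0
  · -- there is a nonzero homogeneous element in I; let e be the least such degree
    set e := Nat.find hP with he
    obtain ⟨f₀, hf₀I, hf₀h, hf₀ne⟩ := Nat.find_spec hP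
    -- find a point x with x 0 ≠ 0, x 1 ≠ 0, eval x f₀ ≠ 0
    have hF : (X 0 * X 1 * f₀ : MvPolynomial (Fin 2) k) ≠ 0 := by
      apply mul_ne_zero (mul_ne_zero (X_ne_zero 0) (X_ne_zero 1)) hf₀ne
    obtain ⟨x, hx⟩ : ∃ x : Fin 2 → k, eval x (X 0 * X 1 * f₀) ≠ 0 := by
      by_contra h
      push_neg at h
      exact hF (MvPolynomial.funext fun y => by rw [h y, map_zero])
    rw [map_mul, map_mul, eval_X, eval_X] at hx
    have hx0 : x 0 ≠ 0 := fun h => hx (by rw [h]; ring)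
    have hx1 : x 1 ≠ 0 := fun h => hx (by rw [h]; ring)
    have hxf : eval x f₀ ≠ 0 := fun h => hx (by rw [h]; ring)
    -- the linear form and the auxiliary linear form
    set ℓ : MvPolynomial (Fin 2) k := C (x 1) * X 0 - C (x 0) * X 1 with hℓdef
    set u : MvPolynomial (Fin 2) k := C (x 0)⁻¹ * X 0 with hudef
    have hℓhom : ℓ.IsHomogeneous 1 :=
      (isHomogeneous_C_mul_X _ _).sub (isHomogeneous_C_mul_X _ _)
    have huhom : u.IsHomogeneous 1 := isHomogeneous_C_mul_X _ _
    have hC0 : (C (x 0) : MvPolynomial (Fin 2) k) * C (x 0)⁻¹ = 1 := by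
      rw [← C_mul, mul_inv_cancel₀ hx0, C_1]
    have hℓne : ℓ ≠ 0 := by
      intro h
      have h2 := congrArg (eval ![1, 0]) h
      simp only [hℓdef, map_sub, map_mul, eval_C, eval_X, map_zero] at h2
      simp [Matrix.cons_val_zero, Matrix.cons_val_one] at h2
      exact hx1 h2
    -- the substitution s, with X j ≡ s j mod (ℓ)
    set s : Fin 2 → MvPolynomial (Fin 2) k := fun j => C (x j) * u with hsdef
    have hs : ∀ j, X j - s j ∈ Ideal.span {ℓ} := by
      intro j
      fin_cases j
      · show X 0 - s 0 ∈ Ideal.span {ℓ}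
        have : X 0 - s 0 = (0 : MvPolynomial (Fin 2) k) := by
          simp only [hsdef, hudef]
          rw [← mul_assoc, hC0, one_mul, sub_self]
        rw [this]; exact Ideal.zero_mem _
      · show X 1 - s 1 ∈ Ideal.span {ℓ}
        refine Ideal.mem_span_singleton.2 ⟨-(C (x 0)⁻¹), ?_⟩
        simp only [hsdef, hudef, hℓdef]
        linear_combination (-X 1 : MvPolynomial (Fin 2) k) * hC0
    have hevalu : eval x u = 1 := by
      simp only [hudef, map_mul, eval_C, eval_X]
      exact inv_mul_cancel₀ hx0
    refine ⟨ℓ, (mem_homogeneousSubmodule _ _).2 hℓhom, hℓne, fun i => ?_⟩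
    by_cases hie : e ≤ i + 1
    · -- surjectivity
      right
      intro g hg
      rw [mem_homogeneousSubmodule] at hg
      set f : MvPolynomial (Fin 2) k := f₀ * u ^ (i + 1 - e) with hfdef
      have hfI : f ∈ I := I.mul_mem_right _ hf₀I
      have hfhom : f.IsHomogeneous (i + 1) := by
        have := hf₀h.mul (huhom.pow (i + 1 - e))
        rwa [one_mul, Nat.add_sub_cancel' hie] at this
      have hevalf : eval x f ≠ 0 := by
        simp only [hfdef, map_mul, map_pow, hevalu, one_pow, mul_one]
        exact hxf
      set c : k := eval x g * (eval x f)⁻¹ with hcdef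
      set D : MvPolynomial (Fin 2) k := g - C c * f with hDdef
      have hDhom : D.IsHomogeneous (i + 1) := hg.sub (hfhom.C_mul c)
      have hevalD : eval x D = 0 := by
        simp only [hDdef, map_sub, map_mul, eval_C, hcdef]
        rw [inv_mul_cancel_right₀ hevalf, sub_self]
      have hDmem : D ∈ Ideal.span {ℓ} := by
        have h1 := sub_aeval_mem (Ideal.span {ℓ}) s hs D
        have h2 : aeval s D = 0 := by
          rw [hsdef]
          rw [aeval_homog x u hDhom, hevalD, map_zero, zero_mul]
        rwa [h2, sub_zero] at h1
      obtain ⟨v, hv⟩ := Ideal.mem_span_singleton.1 hDmem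
      refine ⟨homogeneousComponent i v,
        (mem_homogeneousSubmodule _ _).2 (homogeneousComponent_isHomogeneous i v), ?_⟩
      have hlh : ℓ * homogeneousComponent i v = D := by
        rw [← homogComp_mul hℓhom i v, ← hv]
        rw [homogeneousComponent_of_mem ((mem_homogeneousSubmodule _ _).2 hDhom), if_pos rfl]
      rw [hlh]
      have : g - D = C c * f := by rw [hDdef]; ring
      rw [this]
      exact I.mul_mem_left _ hfI
    · -- injectivity: below degree e there are no nonzero homogeneous elements of I
      left
      intro g hg hlg
      rw [mem_homogeneousSubmodule] at hg
      have hlghom : (ℓ * g).IsHomogeneous (i + 1) := by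
        have := hℓhom.mul hg
        rwa [Nat.add_comm 1 i] at this
      have hlgzero : ℓ * g = 0 := by
        by_contra hne
        exact Nat.find_min hP (by omega : i + 1 < e) ⟨ℓ * g, hlg, hlghom, hne⟩
      rcases mul_eq_zero.1 hlgzero with h | h
      · exact absurd h hℓne
      · rw [h]; exact I.zero_mem
  · -- I contains no nonzero homogeneous element: multiplication by X 0 is always injective
    push_neg at hP
    refine ⟨X 0, (mem_homogeneousSubmodule _ _).2 (isHomogeneous_X _ _), X_ne_zero 0,
      fun i => Or.inl fun g hg hmem => ?_⟩
    rw [mem_homogeneousSubmodule] at hg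
    have hh : (X 0 * g).IsHomogeneous (i + 1) := by
      have := (isHomogeneous_X k (0 : Fin 2)).mul hg
      rwa [Nat.add_comm 1 i] at this
    have : X 0 * g = 0 := hP (i + 1) _ hmem hh
    rcases mul_eq_zero.1 this with h | h
    · exact absurd h (X_ne_zero 0)
    · rw [h]; exact I.zero_mem
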